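/- The derivative Ψ'(I) = 3βI² + 2(2bβ + d)I + (b²β + 2bd − bμ1 + bμ0) of the cubic Ψ has discriminant 4(2bβ + d)² − 12β·b(bβ + 2d − μ1 + μ0) = 4(bβ − d)² + 12bβ(μ1 − μ0) > 0; hence Ψ' has two distinct real roots, i.e., Ψ always has two humps. -/
import Mathlib


/-- The derivative `Ψ'(I) = 3βI² + 2(2bβ + d)I + (b²β + 2bd − bμ1 + bμ0)`
of the cubic `Ψ` has discriminant
`4(2bβ + d)² − 12β·b(bβ + 2d − μ1 + μ0) = 4(bβ − d)² + 12bβ(μ1 − μ0) > 0`;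
hence `Ψ'` has two distinct real roots, i.e., `Ψ` always has two humps. -/
theorem stmt9 (d β b μ0 μ1 : ℝ)
    (hd : 0 < d) (hβ : 0 < β) (hb : 0 < b)
    (hμ0 : 0 < μ0) (hμ1 : 0 < μ1) (hμ : μ0 < μ1)
    (Ψ Ψ' : ℝ → ℝ)
    (hΨ : ∀ I, Ψ I = β * I ^ 3 + (2 * b * β + d) * I ^ 2
      + (b ^ 2 * β + 2 * b * d - b * μ1 + b * μ0) * I + b ^ 2 * d)
    (hΨ' : ∀ I, Ψ' I = 3 * β * I ^ 2 + 2 * (2 * b * β + d) * I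
      + (b ^ 2 * β + 2 * b * d - b * μ1 + b * μ0)) :
    4 * (2 * b * β + d) ^ 2
        - 12 * β * (b * (b * β + 2 * d - μ1 + μ0))
      = 4 * (b * β - d) ^ 2 + 12 * b * β * (μ1 - μ0) ∧
    0 < 4 * (b * β - d) ^ 2 + 12 * b * β * (μ1 - μ0) ∧
    ∃ x y : ℝ, x < y ∧ Ψ' x = 0 ∧ Ψ' y = 0 := by
  have hΔpos : 0 < 4 * (b * β - d) ^ 2 + 12 * b * β * (μ1 - μ0) := by
    have h1 : 0 ≤ 4 * (b * β - d) ^ 2 := by positivity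
    have h2 : 0 < 12 * b * β * (μ1 - μ0) := by
      have : 0 < μ1 - μ0 := by linarith
      positivity
    linarith
  refine ⟨by ring, hΔpos, ?_⟩
  set Δ : ℝ := 4 * (b * β - d) ^ 2 + 12 * b * β * (μ1 - μ0) with hΔ
  have hs : Real.sqrt Δ ^ 2 = Δ := Real.sq_sqrt hΔpos.le
  have hspos : 0 < Real.sqrt Δ := Real.sqrt_pos.mpr hΔpos
  have h6β : (6 * β) ≠ 0 := by positivity
  refine ⟨(-(2 * (2 * b * β + d)) - Real.sqrt Δ) / (6 * β),
         (-(2 * (2 * b * β + d)) + Real.sqrt Δ) / (6 * β), ?_, ?_, ?_⟩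
  · apply div_lt_div_of_pos_right ?_ (by positivity : (0:ℝ) < 6 * β)
    linarith
  · rw [hΨ']
    field_simp
    nlinarith [hs]
  · rw [hΨ']
    field_simp
    nlinarith [hs]
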